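/- Let n ≥ 1 and let ρ and O be 2ⁿ×2ⁿ complex matrices (indexed by bit strings in {0,1}ⁿ) with tr(ρ) = 1. Then tr(ρ O) = (2^{2n}/|𝒜ₙ|) Σ_{A ∈ 𝒜ₙ} ⟨φ^{eq}_A| ρ |φ^{eq}_A⟩ ⟨φ^{eq}_A| O |φ^{eq}_A⟩ + Σ_{x ∈ {0,1}ⁿ} ρ_{xx} O_{xx} − tr(O), where ⟨φ|M|φ⟩ := φ† M φ. -/

import Mathlib

open Finset Matrix

/-- Bit strings of length `n`, with entries viewed as `0/1` integers via `Fin 2`. -/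
abbrev Bits (n : ℕ) := Fin n → Fin 2

/-- The index set `𝒜ₙ`: symmetric `n × n` matrices with diagonal entries in `{0,1,2,3}`
and off-diagonal entries in `{0,1}` (encoded inside `Fin 4`). -/
def An (n : ℕ) : Finset (Matrix (Fin n) (Fin n) (Fin 4)) :=
  @Finset.filter _ (fun A => (∀ i j, A i j = A j i) ∧ ∀ i j, i ≠ j → (A i j : ℕ) < 2)
    (fun A => @instDecidableAnd _ _
      (@Fintype.decidableForallFintype _ _
        (fun i => @Fintype.decidableForallFintype _ _
          (fun j => instDecidableEqFin 4 (A i j) (A j i)) _) _) inferInstance) Finset.univ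

/-- The quadratic form `xᵀ A x`, computed in `ℤ` (here in `ℕ`). -/
def quadA {n : ℕ} (A : Matrix (Fin n) (Fin n) (Fin 4)) (x : Bits n) : ℕ :=
  ∑ i, ∑ j, (A i j : ℕ) * (x i : ℕ) * (x j : ℕ)

/-- The complex equatorial stabilizer state `φ^{eq}_A`. -/
noncomputable def phiEq {n : ℕ} (A : Matrix (Fin n) (Fin n) (Fin 4)) (x : Bits n) : ℂ :=
  Complex.I ^ quadA A x / (Real.sqrt (2 ^ n) : ℂ)

/-- The sandwich `⟨φ|M|φ⟩ = φ† M φ`. -/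
noncomputable def braket {ι : Type*} [Fintype ι] (φ : ι → ℂ) (M : Matrix ι ι ℂ) : ℂ :=
  star φ ⬝ᵥ (M *ᵥ φ)

abbrev Pairs (n : ℕ) := {p : Fin n × Fin n // p.1 < p.2}

def mkA {n : ℕ} (d : Fin n → Fin 4) (f : Pairs n → Fin 2) :
    Matrix (Fin n) (Fin n) (Fin 4) := fun i j =>
  if hij : i < j then (f ⟨(i, j), hij⟩).castLE (by norm_num)
  else if hji : j < i then (f ⟨(j, i), hji⟩).castLE (by norm_num)
  else d i

lemma mkA_mem {n : ℕ} (d : Fin n → Fin 4) (f : Pairs n → Fin 2) : mkA d f ∈ An n := by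
  simp only [An, mem_filter, mem_univ, true_and]
  constructor
  · intro i j
    rcases lt_trichotomy i j with h | h | h
    · simp [mkA, h, h.not_gt]
    · subst h; rfl
    · simp [mkA, h, h.not_gt]
  · intro i j hij
    rcases lt_trichotomy i j with h | h | h
    · simp only [mkA, dif_pos h]; exact (f ⟨(i,j), h⟩).isLt
    · exact absurd h hij
    · simp only [mkA, dif_neg h.not_gt, dif_pos h]; exact (f ⟨(j,i), h⟩).isLt

lemma mkA_diag {n : ℕ} (d : Fin n → Fin 4) (f : Pairs n → Fin 2) (i : Fin n) :
    mkA d f i i = d i := by simp [mkA]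

lemma mkA_off {n : ℕ} (d : Fin n → Fin 4) (f : Pairs n → Fin 2) (p : Pairs n) :
    mkA d f p.1.1 p.1.2 = (f p).castLE (by norm_num) := by
  simp [mkA, p.2]


def dOf {n : ℕ} (A : Matrix (Fin n) (Fin n) (Fin 4)) : Fin n → Fin 4 := fun i => A i i

def fOf {n : ℕ} (A : Matrix (Fin n) (Fin n) (Fin 4)) (p : Pairs n) : Fin 2 :=
  if h : (A p.1.1 p.1.2 : ℕ) < 2 then ⟨(A p.1.1 p.1.2 : ℕ), h⟩ else 0

lemma mkA_inj {n : ℕ} (A : Matrix (Fin n) (Fin n) (Fin 4)) (hA : A ∈ An n) :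
    mkA (dOf A) (fOf A) = A := by
  simp only [An, mem_filter, mem_univ, true_and] at hA
  funext i j
  rcases lt_trichotomy i j with h | h | h
  · have h2 := hA.2 i j h.ne
    simp only [mkA, dif_pos h, fOf, dif_pos h2]
    ext; simp
  · subst h; simp [mkA, dOf]
  · have h2 := hA.2 j i h.ne
    rw [hA.1]
    simp only [mkA, dif_neg h.not_gt, dif_pos h, fOf]
    simp only [dif_pos h2]
    ext; simp

lemma dOf_mkA {n : ℕ} (d : Fin n → Fin 4) (f : Pairs n → Fin 2) : dOf (mkA d f) = d := by
  funext i; simp [dOf, mkA]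

lemma fOf_mkA {n : ℕ} (d : Fin n → Fin 4) (f : Pairs n → Fin 2) : fOf (mkA d f) = f := by
  funext p
  have := mkA_off d f p
  simp only [fOf, this]
  have h2 : ((f p).castLE (show 2 ≤ 4 by norm_num) : ℕ) < 2 := by simp [(f p).isLt]
  rw [dif_pos h2]
  ext; simp

lemma sum_An {n : ℕ} {β : Type*} [AddCommMonoid β] (F : Matrix (Fin n) (Fin n) (Fin 4) → β) :
    ∑ A ∈ An n, F A
      = ∑ q : (Fin n → Fin 4) × (Pairs n → Fin 2), F (mkA q.1 q.2) := by
  refine Finset.sum_nbij' (fun A => (dOf A, fOf A)) (fun q => mkA q.1 q.2)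
    (fun A _ => mem_univ _) (fun q _ => mkA_mem q.1 q.2)
    (fun A hA => mkA_inj A hA) (fun q _ => by simp [dOf_mkA, fOf_mkA])
    (fun A hA => by rw [mkA_inj A hA])

lemma card_An {n : ℕ} :
    ((An n).card : ℂ) = (4:ℂ) ^ n * 2 ^ (Fintype.card (Pairs n)) := by
  have : (An n).card = ∑ A ∈ An n, 1 := by simp
  rw [this, sum_An (fun _ => (1:ℕ))]
  push_cast [Finset.sum_const]
  simp [Fintype.card_prod, Fintype.card_fun]


lemma sum_pairs_eq {n : ℕ} {β : Type*} [AddCommMonoid β] (g : Fin n × Fin n → β) :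
    ∑ p : Pairs n, g p.1 = ∑ p ∈ univ.filter (fun p : Fin n × Fin n => p.1 < p.2), g p := by
  rw [Finset.sum_subtype (p := fun p : Fin n × Fin n => p.1 < p.2) _ (by simp) g]

lemma double_sum_split {n : ℕ} {β : Type*} [AddCommMonoid β] (t : Fin n → Fin n → β) :
    ∑ i, ∑ j, t i j
      = (∑ i, t i i) + ∑ p : Pairs n, (t p.1.1 p.1.2 + t p.1.2 p.1.1) := by
  rw [show (∑ i, ∑ j, t i j) = ∑ p : Fin n × Fin n, t p.1 p.2 from
    (Fintype.sum_prod_type (f := fun p : Fin n × Fin n => t p.1 p.2)).symm]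
  rw [sum_pairs_eq (fun p => t p.1 p.2 + t p.2 p.1), Finset.sum_add_distrib]
  rw [← Finset.sum_filter_add_sum_filter_not univ (fun p : Fin n × Fin n => p.1 < p.2)
    (fun p => t p.1 p.2)]
  have h1 : ∑ p ∈ univ.filter (fun p : Fin n × Fin n => ¬ p.1 < p.2), t p.1 p.2
      = (∑ i, t i i) + ∑ p ∈ univ.filter (fun p : Fin n × Fin n => p.1 < p.2), t p.2 p.1 := by
    rw [← Finset.sum_filter_add_sum_filter_not
      (univ.filter (fun p : Fin n × Fin n => ¬ p.1 < p.2)) (fun p => p.1 = p.2)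
      (fun p => t p.1 p.2), Finset.filter_filter, Finset.filter_filter]
    congr 1
    · refine Finset.sum_nbij' (fun p => p.1) (fun i => (i, i)) ?_ ?_ ?_ ?_ ?_
      · intro a _; exact mem_univ _
      · intro i _; simp
      · intro a ha; simp only [mem_filter] at ha; ext <;> simp [ha.2.2]
      · intro i _; rfl
      · intro a ha; simp only [mem_filter] at ha; simp only [← ha.2.2]
    · refine Finset.sum_nbij' Prod.swap Prod.swap ?_ ?_ ?_ ?_ ?_
      · intro a ha; simp only [mem_filter] at ha ⊢
        exact ⟨mem_univ _, lt_of_le_of_ne (not_lt.mp ha.2.1) (Ne.symm ha.2.2)⟩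
      · intro a ha; simp only [mem_filter] at ha ⊢
        exact ⟨mem_univ _, ⟨ha.2.not_gt, ha.2.ne'⟩⟩
      · intro a _; rfl
      · intro a _; rfl
      · intro a _; rfl
  rw [h1]; abel

lemma quadA_mkA {n : ℕ} (d : Fin n → Fin 4) (f : Pairs n → Fin 2) (x : Bits n) :
    quadA (mkA d f) x
      = (∑ i, (d i : ℕ) * (x i : ℕ))
        + 2 * ∑ p : Pairs n, (f p : ℕ) * (x p.1.1 : ℕ) * (x p.1.2 : ℕ) := by
  unfold quadA
  rw [double_sum_split (fun i j => ((mkA d f i j : ℕ) * (x i : ℕ) * (x j : ℕ)))]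
  congr 1
  · refine Finset.sum_congr rfl fun i _ => ?_
    rw [mkA_diag]
    have : (x i : ℕ) * (x i : ℕ) = (x i : ℕ) := by
      have := (x i).isLt; interval_cases h : (x i : ℕ) <;> simp
    rw [mul_assoc, this]
  · rw [Finset.mul_sum]
    refine Finset.sum_congr rfl fun p _ => ?_
    have hsym : mkA d f p.1.2 p.1.1 = mkA d f p.1.1 p.1.2 := by
      simp only [mkA, dif_neg p.2.not_gt, dif_pos p.2]
    rw [hsym, mkA_off]
    have : ((f p).castLE (show 2 ≤ 4 by norm_num) : ℕ) = (f p : ℕ) := by simp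
    rw [this]; ring

lemma I_pow_mod (c : ℕ) : Complex.I ^ c = Complex.I ^ (c % 4) := by
  conv_lhs => rw [← Nat.div_add_mod c 4]
  rw [pow_add, pow_mul, Complex.I_pow_four, one_pow, one_mul]

lemma sum_fin4 (c : ℕ) :
    ∑ a : Fin 4, (Complex.I ^ c) ^ (a : ℕ) = if c % 4 = 0 then 4 else 0 := by
  rw [I_pow_mod c, Fin.sum_univ_four]
  have h : c % 4 < 4 := Nat.mod_lt _ (by norm_num)
  interval_cases h : c % 4 <;>
    simp only [show ((0:Fin 4):ℕ)=0 from rfl, show ((1:Fin 4):ℕ)=1 from rfl,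
      show ((2:Fin 4):ℕ)=2 from rfl, show ((3:Fin 4):ℕ)=3 from rfl, pow_zero, pow_one,
      if_true, if_false] <;>
    norm_num [pow_succ, Complex.I_sq]

lemma sum_fin2 (e : ℕ) :
    ∑ b : Fin 2, ((-1 : ℂ) ^ e) ^ (b : ℕ) = if e % 2 = 0 then 2 else 0 := by
  rw [Fin.sum_univ_two]
  rcases Nat.even_or_odd e with he | he
  · rw [if_pos (Nat.even_iff.mp he), he.neg_one_pow]; norm_num
  · rw [if_neg (by simpa [Nat.odd_iff] using he), he.neg_one_pow]; norm_num

noncomputable def cCoef (x y u v : Bits n) (i : Fin n) : ℕ :=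
  (y i : ℕ) + (v i : ℕ) + 3 * ((x i : ℕ) + (u i : ℕ))

noncomputable def eCoef (x y u v : Bits n) (p : Pairs n) : ℕ :=
  (y p.1.1 : ℕ) * (y p.1.2 : ℕ) + (v p.1.1 : ℕ) * (v p.1.2 : ℕ)
    + 3 * ((x p.1.1 : ℕ) * (x p.1.2 : ℕ) + (u p.1.1 : ℕ) * (u p.1.2 : ℕ))

/-- The total phase exponent for `mkA d f`. -/
lemma phase_exponent {n : ℕ} (d : Fin n → Fin 4) (f : Pairs n → Fin 2) (x y u v : Bits n) :
    quadA (mkA d f) y + quadA (mkA d f) v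
        + 3 * (quadA (mkA d f) x + quadA (mkA d f) u)
      = (∑ i, (d i : ℕ) * cCoef x y u v i)
        + 2 * ∑ p : Pairs n, (f p : ℕ) * eCoef x y u v p := by
  simp only [quadA_mkA]
  have h1 : ∑ i, (d i : ℕ) * cCoef x y u v i
      = (∑ i, (d i : ℕ) * (y i : ℕ)) + (∑ i, (d i : ℕ) * (v i : ℕ))
        + 3 * ((∑ i, (d i : ℕ) * (x i : ℕ)) + (∑ i, (d i : ℕ) * (u i : ℕ))) := by
    simp only [cCoef, Finset.mul_sum, ← Finset.sum_add_distrib]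
    exact Finset.sum_congr rfl fun i _ => by ring
  have h2 : ∑ p : Pairs n, (f p : ℕ) * eCoef x y u v p
      = (∑ p : Pairs n, (f p : ℕ) * (y p.1.1 : ℕ) * (y p.1.2 : ℕ))
        + (∑ p : Pairs n, (f p : ℕ) * (v p.1.1 : ℕ) * (v p.1.2 : ℕ))
        + 3 * ((∑ p : Pairs n, (f p : ℕ) * (x p.1.1 : ℕ) * (x p.1.2 : ℕ))
          + (∑ p : Pairs n, (f p : ℕ) * (u p.1.1 : ℕ) * (u p.1.2 : ℕ))) := by
    simp only [eCoef, Finset.mul_sum, ← Finset.sum_add_distrib]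
    exact Finset.sum_congr rfl fun p _ => by ring
  rw [h1, h2]
  ring

noncomputable def ind (x y u v : Bits n) : ℂ :=
  if (∀ i, cCoef x y u v i % 4 = 0) ∧ (∀ p : Pairs n, eCoef x y u v p % 2 = 0)
  then 1 else 0

lemma sum_phase {n : ℕ} (x y u v : Bits n) :
    ∑ A ∈ An n,
        Complex.I ^ (quadA A y + quadA A v + 3 * (quadA A x + quadA A u))
      = ((An n).card : ℂ) * ind x y u v := by
  rw [sum_An (fun A => Complex.I ^ (quadA A y + quadA A v + 3 * (quadA A x + quadA A u)))]
  have hsplit : ∀ (d : Fin n → Fin 4) (f : Pairs n → Fin 2),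
      Complex.I ^ (quadA (mkA d f) y + quadA (mkA d f) v
          + 3 * (quadA (mkA d f) x + quadA (mkA d f) u))
        = (∏ i, (Complex.I ^ cCoef x y u v i) ^ ((d i : ℕ)))
          * ∏ p : Pairs n, ((-1 : ℂ) ^ eCoef x y u v p) ^ ((f p : ℕ)) := by
    intro d f
    rw [phase_exponent d f x y u v, pow_add]
    congr 1
    · rw [← Finset.prod_pow_eq_pow_sum]
      exact Finset.prod_congr rfl fun i _ => by rw [← pow_mul, mul_comm]
    · rw [pow_mul, Complex.I_sq, ← Finset.prod_pow_eq_pow_sum]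
      exact Finset.prod_congr rfl fun p _ => by rw [← pow_mul, mul_comm]
  rw [Fintype.sum_prod_type]
  simp only [hsplit]
  rw [← Finset.sum_mul_sum]
  rw [show (∑ d : Fin n → Fin 4, ∏ i, (Complex.I ^ cCoef x y u v i) ^ ((d i : ℕ)))
      = ∏ i, ∑ a : Fin 4, (Complex.I ^ cCoef x y u v i) ^ ((a : ℕ)) from by
    rw [Finset.prod_univ_sum]; simp]
  rw [show (∑ f : Pairs n → Fin 2, ∏ p : Pairs n, ((-1:ℂ) ^ eCoef x y u v p) ^ ((f p : ℕ)))
      = ∏ p : Pairs n, ∑ b : Fin 2, ((-1:ℂ) ^ eCoef x y u v p) ^ ((b : ℕ)) from by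
    rw [Finset.prod_univ_sum]; simp]
  simp only [sum_fin4, sum_fin2]
  rw [card_An, ind]
  by_cases hc : ∀ i, cCoef x y u v i % 4 = 0
  · by_cases he : ∀ p : Pairs n, eCoef x y u v p % 2 = 0
    · rw [if_pos ⟨hc, he⟩]
      rw [Finset.prod_congr rfl fun i _ => if_pos (hc i),
        Finset.prod_congr rfl fun p _ => if_pos (he p)]
      simp
    · push_neg at he; obtain ⟨p, hp⟩ := he
      rw [if_neg (fun h => hp (h.2 p))]
      rw [Finset.prod_eq_zero (mem_univ p) (show (if eCoef x y u v p % 2 = 0 then (2:ℂ) else 0) = 0 from if_neg hp)]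
      ring
  · push_neg at hc; obtain ⟨i, hi⟩ := hc
    rw [if_neg (fun h => hi (h.1 i))]
    rw [Finset.prod_eq_zero (mem_univ i) (show (if cCoef x y u v i % 4 = 0 then (4:ℂ) else 0) = 0 from if_neg hi)]
    ring

lemma key1 : ∀ a b c d : Fin 2, ((c:ℕ) + (d:ℕ) + 3*((a:ℕ) + (b:ℕ))) % 4 = 0 →
    (c = a ∧ d = b) ∨ (c = b ∧ d = a) := by decide

lemma key2 : ∀ a b c d a' b' c' d' : Fin 2,
    (c = b ∧ d = a ∧ a ≠ b) → (c' = a' ∧ d' = b' ∧ a' ≠ b') →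
    ((c:ℕ)*(c':ℕ) + (d:ℕ)*(d':ℕ) + 3*((a:ℕ)*(a':ℕ) + (b:ℕ)*(b':ℕ))) % 2 ≠ 0 := by decide

lemma key2' : ∀ a b c d a' b' c' d' : Fin 2,
    (c = a ∧ d = b ∧ a ≠ b) → (c' = b' ∧ d' = a' ∧ a' ≠ b') →
    ((c:ℕ)*(c':ℕ) + (d:ℕ)*(d':ℕ) + 3*((a:ℕ)*(a':ℕ) + (b:ℕ)*(b':ℕ))) % 2 ≠ 0 := by decide

lemma ind_iff {n : ℕ} (x y u v : Bits n) :
    ((∀ i, cCoef x y u v i % 4 = 0) ∧ (∀ p : Pairs n, eCoef x y u v p % 2 = 0))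
      ↔ ((y = x ∧ v = u) ∨ (y = u ∧ v = x)) := by
  constructor
  · rintro ⟨hc, he⟩
    have percoord : ∀ i, (y i = x i ∧ v i = u i) ∨ (y i = u i ∧ v i = x i) :=
      fun i => key1 (x i) (u i) (y i) (v i) (hc i)
    rcases Classical.em (∀ i, y i = x i ∧ v i = u i) with hall | hnall
    · exact Or.inl ⟨funext fun i => (hall i).1, funext fun i => (hall i).2⟩
    rcases Classical.em (∀ j, y j = u j ∧ v j = x j) with hall2 | hnall2
    · exact Or.inr ⟨funext fun i => (hall2 i).1, funext fun i => (hall2 i).2⟩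
    exfalso
    obtain ⟨i, hki⟩ := not_forall.mp hnall2
    obtain ⟨j, hkj⟩ := not_forall.mp hnall
    have hi : y i = x i ∧ v i = u i := (percoord i).resolve_right hki
    have hj : y j = u j ∧ v j = x j := (percoord j).resolve_left hkj
    have hxui : x i ≠ u i := fun h => hki ⟨hi.1.trans h, hi.2.trans h.symm⟩
    have hxuj : x j ≠ u j := fun h => hkj ⟨hj.1.trans h.symm, hj.2.trans h⟩
    have hij : i ≠ j := fun h => hxui (by rw [h]; exact hj.1.symm.trans (h ▸ hi.1) ▸ (hj.1 ▸ (h ▸ hi.1)).symm ▸ rfl)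
    rcases hij.lt_or_gt with hlt | hlt
    · exact key2' (x i) (u i) (y i) (v i) (x j) (u j) (y j) (v j)
        ⟨hi.1, hi.2, hxui⟩ ⟨hj.1, hj.2, hxuj⟩ (he ⟨(i, j), hlt⟩)
    · exact key2 (x j) (u j) (y j) (v j) (x i) (u i) (y i) (v i)
        ⟨hj.1, hj.2, hxuj⟩ ⟨hi.1, hi.2, hxui⟩ (he ⟨(j, i), hlt⟩)
  · have habs : ∀ A B : ℕ, (A + B + 3 * (B + A)) % 4 = 0 := by omega
    have habs2 : ∀ A B : ℕ, (A + B + 3 * (B + A)) % 2 = 0 := by omega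
    rintro (⟨hy, hv⟩ | ⟨hy, hv⟩) <;> subst hy <;> subst hv <;>
      exact ⟨fun i => by simpa [cCoef, add_comm] using habs _ _,
        fun p => by simpa [eCoef, add_comm] using habs2 _ _⟩

lemma ind_eq {n : ℕ} (x y u v : Bits n) :
    ind x y u v
      = (if y = x ∧ v = u then (1:ℂ) else 0) + (if y = u ∧ v = x then 1 else 0)
        - (if y = x ∧ u = x ∧ v = x then 1 else 0) := by
  rw [ind, if_congr (ind_iff x y u v) rfl rfl]
  by_cases h1 : y = x ∧ v = u <;> by_cases h2 : y = u ∧ v = x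
  · have h3 : y = x ∧ u = x ∧ v = x :=
      ⟨h1.1, (h2.1.symm.trans h1.1), h2.2⟩
    rw [if_pos (Or.inl h1), if_pos h1, if_pos h2, if_pos h3]; ring
  · have h3 : ¬(y = x ∧ u = x ∧ v = x) := fun h => h2 ⟨h.1.trans h.2.1.symm, h.2.2⟩
    rw [if_pos (Or.inl h1), if_pos h1, if_neg h2, if_neg h3]; ring
  · have h3 : ¬(y = x ∧ u = x ∧ v = x) := fun h => h1 ⟨h.1, h.2.2.trans h.2.1.symm⟩
    rw [if_pos (Or.inr h2), if_neg h1, if_pos h2, if_neg h3]; ring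
  · have h3 : ¬(y = x ∧ u = x ∧ v = x) := fun h => h1 ⟨h.1, h.2.2.trans h.2.1.symm⟩
    rw [if_neg (by tauto), if_neg h1, if_neg h2, if_neg h3]; ring

lemma braket_expand {ι : Type*} [Fintype ι] (φ : ι → ℂ) (M : Matrix ι ι ℂ) :
    braket φ M = ∑ p : ι × ι, star (φ p.1) * (M p.1 p.2 * φ p.2) := by
  rw [Fintype.sum_prod_type]
  simp [braket, dotProduct, mulVec, Finset.mul_sum]

lemma phi_term {n : ℕ} (A : Matrix (Fin n) (Fin n) (Fin 4)) (ρ O : Matrix (Bits n) (Bits n) ℂ)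
    (x y u v : Bits n) :
    (star (phiEq A x) * (ρ x y * phiEq A y)) * (star (phiEq A u) * (O u v * phiEq A v))
      = ρ x y * O u v * (1 / 2 ^ (2 * n) : ℂ)
          * Complex.I ^ (quadA A y + quadA A v + 3 * (quadA A x + quadA A u)) := by
  set S : ℂ := (Real.sqrt (2 ^ n) : ℂ) with hS
  have hS0 : S ≠ 0 := by
    rw [hS]
    exact_mod_cast Complex.ofReal_ne_zero.mpr (ne_of_gt (Real.sqrt_pos.mpr (by positivity)))
  have hS2 : S ^ 2 = (2 : ℂ) ^ n := by
    rw [hS, ← Complex.ofReal_pow, Real.sq_sqrt (by positivity)]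
    push_cast; ring
  have hS4 : S ^ 4 = (2 : ℂ) ^ (2 * n) := by
    rw [show (4:ℕ) = 2*2 from rfl, pow_mul, hS2, mul_comm 2 n, pow_mul]
  have hrw : ∀ k : ℕ, (-Complex.I) ^ k = Complex.I ^ (3 * k) := by
    intro k
    rw [show (-Complex.I) = Complex.I ^ 3 from by norm_num [pow_succ, Complex.I_sq], ← pow_mul]
  have hstar : ∀ k : ℕ, star (Complex.I ^ k / S) = Complex.I ^ (3 * k) / S := by
    intro k
    rw [star_div₀, star_pow, hS]
    simp only [Complex.star_def, Complex.conj_I, Complex.conj_ofReal, hrw]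
  simp only [phiEq, hstar, ← hS]
  rw [← hS4]
  field_simp
  ring

lemma sum_braket {n : ℕ} (ρ O : Matrix (Bits n) (Bits n) ℂ) :
    ∑ A ∈ An n, braket (phiEq A) ρ * braket (phiEq A) O
      = (((An n).card : ℂ) / 2 ^ (2 * n)) * ∑ p : Bits n × Bits n, ∑ q : Bits n × Bits n,
          ρ p.1 p.2 * O q.1 q.2 * ind p.1 p.2 q.1 q.2 := by
  have e1 : ∀ A, braket (phiEq A) ρ * braket (phiEq A) O
      = ∑ p : Bits n × Bits n, ∑ q : Bits n × Bits n,
          (star (phiEq A p.1) * (ρ p.1 p.2 * phiEq A p.2))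
            * (star (phiEq A q.1) * (O q.1 q.2 * phiEq A q.2)) := by
    intro A; rw [braket_expand, braket_expand, Finset.sum_mul_sum]
  have e2 : ∀ p q : Bits n × Bits n,
      (∑ A ∈ An n, ρ p.1 p.2 * O q.1 q.2 * (1 / 2 ^ (2 * n) : ℂ)
          * Complex.I ^ (quadA A p.2 + quadA A q.2 + 3 * (quadA A p.1 + quadA A q.1)))
        = (((An n).card : ℂ) / 2 ^ (2 * n))
            * (ρ p.1 p.2 * O q.1 q.2 * ind p.1 p.2 q.1 q.2) := by
    intro p q
    rw [← Finset.mul_sum, sum_phase]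
    ring
  simp only [e1, phi_term]
  rw [Finset.sum_comm]
  rw [Finset.sum_congr rfl fun p _ => Finset.sum_comm]
  simp only [e2]
  rw [Finset.mul_sum]
  exact Finset.sum_congr rfl fun p _ => by rw [Finset.mul_sum]

lemma sum_pt {α : Type*} [Fintype α] [DecidableEq α] (g : α → ℂ) (P : α → Prop)
    [DecidablePred P] (a : α) (hP : ∀ q, P q ↔ q = a) :
    (∑ q, g q * if P q then 1 else 0) = g a := by
  rw [Fintype.sum_eq_single a (fun q hq => by rw [if_neg (fun h => hq ((hP q).mp h)), mul_zero])]
  rw [if_pos ((hP a).mpr rfl), mul_one]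

lemma diag_ind {n : ℕ} (M : Matrix (Bits n) (Bits n) ℂ) :
    (∑ p : Bits n × Bits n, M p.1 p.2 * (if p.2 = p.1 then (1:ℂ) else 0)) = M.trace := by
  rw [Fintype.sum_prod_type, Matrix.trace]
  refine Finset.sum_congr rfl fun x _ => ?_
  simp [mul_ite, mul_one, mul_zero, Finset.sum_ite_eq', Matrix.diag]

lemma ind_sum_eval {n : ℕ} (ρ O : Matrix (Bits n) (Bits n) ℂ) :
    (∑ p : Bits n × Bits n, ∑ q : Bits n × Bits n,
        ρ p.1 p.2 * O q.1 q.2 * ind p.1 p.2 q.1 q.2)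
      = ρ.trace * O.trace + (ρ * O).trace - ∑ x : Bits n, ρ x x * O x x := by
  simp only [ind_eq, mul_add, mul_sub, Finset.sum_add_distrib, Finset.sum_sub_distrib]
  congr 1
  · congr 1
    · -- A1 = trace ρ * trace O
      have hin : ∀ p : Bits n × Bits n,
          (∑ q : Bits n × Bits n,
            ρ p.1 p.2 * O q.1 q.2 * (if p.2 = p.1 ∧ q.2 = q.1 then (1:ℂ) else 0))
          = (ρ p.1 p.2 * (if p.2 = p.1 then (1:ℂ) else 0)) * O.trace := by
        intro p
        rw [← diag_ind O, Finset.mul_sum]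
        refine Finset.sum_congr rfl fun q _ => ?_
        by_cases h1 : p.2 = p.1 <;> by_cases h2 : q.2 = q.1 <;>
          simp [h1, h2]
      simp only [hin]
      rw [← Finset.sum_mul, diag_ind ρ]
    · -- A2 = trace (ρ * O)
      have hin : ∀ p : Bits n × Bits n,
          (∑ q : Bits n × Bits n,
            ρ p.1 p.2 * O q.1 q.2 * (if p.2 = q.1 ∧ q.2 = p.1 then (1:ℂ) else 0))
          = ρ p.1 p.2 * O p.2 p.1 := by
        intro p
        have := sum_pt (fun q : Bits n × Bits n => ρ p.1 p.2 * O q.1 q.2)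
          (fun q => p.2 = q.1 ∧ q.2 = p.1) (p.2, p.1)
          (fun q => by constructor
                       · rintro ⟨h1, h2⟩; exact Prod.ext h1.symm h2
                       · rintro rfl; exact ⟨rfl, rfl⟩)
        simpa using this
      simp only [hin]
      rw [Fintype.sum_prod_type, Matrix.trace]
      refine Finset.sum_congr rfl fun x _ => ?_
      simp [Matrix.diag, Matrix.mul_apply]
  · -- A3
    have hin : ∀ p : Bits n × Bits n,
        (∑ q : Bits n × Bits n,
          ρ p.1 p.2 * O q.1 q.2 * (if p.2 = p.1 ∧ q.1 = p.1 ∧ q.2 = p.1 then (1:ℂ) else 0))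
        = if p.2 = p.1 then ρ p.1 p.2 * O p.1 p.1 else 0 := by
      intro p
      by_cases hpp : p.2 = p.1
      · rw [if_pos hpp]
        have := sum_pt (fun q : Bits n × Bits n => ρ p.1 p.2 * O q.1 q.2)
          (fun q => p.2 = p.1 ∧ q.1 = p.1 ∧ q.2 = p.1) (p.1, p.1)
          (fun q => by constructor
                       · rintro ⟨_, h1, h2⟩; exact Prod.ext h1 h2
                       · rintro rfl; exact ⟨hpp, rfl, rfl⟩)
        simpa using this
      · rw [if_neg hpp]
        refine Finset.sum_eq_zero fun q _ => ?_
        rw [if_neg (fun h => hpp h.1), mul_zero]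
    simp only [hin]
    rw [Fintype.sum_prod_type]
    refine Finset.sum_congr rfl fun x _ => ?_
    simp [Finset.sum_ite_eq']


/-- the ESPOVM + computational-basis decomposition of `tr(ρ O)`. -/
theorem espovm_tomography_identity (n : ℕ) (hn : 1 ≤ n)
    (ρ O : Matrix (Bits n) (Bits n) ℂ) (hρ : ρ.trace = 1) :
    (ρ * O).trace =
      ((2 : ℂ) ^ (2 * n) / ((An n).card : ℂ)) *
          (∑ A ∈ An n, braket (phiEq A) ρ * braket (phiEq A) O)
        + (∑ x : Bits n, ρ x x * O x x) - O.trace := by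
  rw [sum_braket, ind_sum_eval, hρ]
  have hcard : ((An n).card : ℂ) ≠ 0 := by
    have : (An n).Nonempty := ⟨mkA (fun _ => 0) (fun _ => 0), mkA_mem _ _⟩
    exact_mod_cast Nat.cast_ne_zero.mpr (Finset.card_ne_zero.mpr this)
  have h2 : ((2:ℂ) ^ (2*n)) ≠ 0 := pow_ne_zero _ two_ne_zero
  field_simp
  ring
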